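/- Let A be a unary automaton with n states, one letter a, and rank r. If c_1,...,c_r are the cardinalities of the equivalence classes of the relation q ~ p iff q·a^{n-r} = p·a^{n-r}, then the number of compressible pairs equals Σ_{i=1}^r c_i(c_i - 1)/2, and Σ_{i=1}^r c_i(c_i-1)/2 ≥ (n/2)(n/r - 1). -/

import Mathlib

open scoped Classical

namespace UnaryAux

variable {Q : Type*} [Fintype Q] [DecidableEq Q]

/-- The image of the whole state set under `f^[i]`. -/
def S (f : Q → Q) (i : ℕ) : Finset Q := Finset.univ.image (f^[i])

lemma S_succ (f : Q → Q) (i : ℕ) : S f (i + 1) = (S f i).image f := by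
  simp only [S, Finset.image_image]
  congr 1
  ext x
  exact Function.iterate_succ_apply' f i x

lemma S_succ_subset (f : Q → Q) (i : ℕ) : S f (i + 1) ⊆ S f i := by
  intro x hx
  simp only [S, Finset.mem_image] at hx ⊢
  obtain ⟨y, -, rfl⟩ := hx
  exact ⟨f y, Finset.mem_univ _, (Function.iterate_succ_apply f i y).symm⟩

lemma S_anti (f : Q → Q) {i j : ℕ} (h : i ≤ j) : S f j ⊆ S f i := by
  induction h with
  | refl => exact Finset.Subset.refl _
  | step _ ih => exact (S_succ_subset f _).trans ih

lemma S_stab (f : Q → Q) {i : ℕ} (h : (S f i).card ≤ (S f (i + 1)).card) :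
    ∀ k, S f (i + k) = S f i := by
  have h1 : S f (i + 1) = S f i := Finset.eq_of_subset_of_card_le (S_succ_subset f i) h
  intro k
  induction k with
  | zero => rfl
  | succ k ih =>
    have : S f (i + (k + 1)) = (S f (i + k)).image f := by
      rw [show i + (k + 1) = (i + k) + 1 by ring, S_succ]
    rw [this, ih, ← S_succ, h1]

lemma card_S_rank (f : Q → Q) (n r : ℕ) (hn : Fintype.card Q = n)
    (hr : IsLeast {c | ∃ i : ℕ, (S f i).card = c} r) : (S f (n - r)).card = r := by
  have hlb : ∀ i, r ≤ (S f i).card := fun i => hr.2 ⟨i, rfl⟩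
  obtain ⟨i0, hi0⟩ := hr.1
  have hstep : ∀ i, (S f i).card ≠ r → (S f (i + 1)).card < (S f i).card := by
    intro i hne
    by_contra hle
    push_neg at hle
    have hstab := S_stab f hle
    rcases le_total i i0 with h | h
    · have := hstab (i0 - i)
      rw [show i + (i0 - i) = i0 by omega] at this
      exact hne (by rw [← this, hi0])
    · have h1 : (S f i).card ≤ (S f i0).card := Finset.card_le_card (S_anti f h)
      exact hne (le_antisymm (hi0 ▸ h1) (hlb i))
  have main : ∀ i, (S f i).card = r ∨ (S f i).card ≤ n - i := by
    intro i
    induction i with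
    | zero =>
      right
      have : S f 0 = Finset.univ := by simp [S]
      rw [this]
      simp [hn]
    | succ i ih =>
      by_cases hi : (S f i).card = r
      · left
        exact le_antisymm (hi ▸ Finset.card_le_card (S_succ_subset f i)) (hlb _)
      · rcases ih with h | h
        · exact absurd h hi
        · right
          have := hstep i hi
          omega
      
  rcases main (n - r) with h | h
  · exact h
  · have := hlb (n - r)
    omega

lemma compress (f : Q → Q) (m : ℕ) (hm : ∀ j, m ≤ j → (S f j).card = (S f m).card) :
    ∀ i p q, f^[i] p = f^[i] q → f^[m] p = f^[m] q := by
  have hcard : ((S f m).image f).card = (S f m).card := by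
    rw [← S_succ]; exact hm (m + 1) (Nat.le_succ m)
  have hinj : Set.InjOn f (S f m) := Finset.injOn_of_card_image_eq hcard
  have heq : (S f m).image f = S f m := by
    rw [← S_succ]
    exact Finset.eq_of_subset_of_card_le (S_succ_subset f m)
      (le_of_eq (hm (m + 1) (Nat.le_succ m)).symm)
  have hmem : ∀ k, ∀ y ∈ S f m, f^[k] y ∈ S f m := by
    intro k
    induction k with
    | zero => intro y hy; simpa using hy
    | succ k ih =>
      intro y hy
      rw [Function.iterate_succ_apply' f k y]
      exact heq ▸ Finset.mem_image_of_mem f (ih y hy)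
  have hinjk : ∀ k, Set.InjOn (f^[k]) (S f m) := by
    intro k
    induction k with
    | zero => intro x _ y _ h; simpa using h
    | succ k ih =>
      intro x hx y hy h
      rw [Function.iterate_succ_apply' f k x, Function.iterate_succ_apply' f k y] at h
      exact ih hx hy (hinj (hmem k x hx) (hmem k y hy) h)
  intro i p q h
  rcases le_total i m with hle | hle
  · have hp : f^[m] p = f^[m - i] (f^[i] p) := by
      rw [← Function.iterate_add_apply]; congr 1; omega
    have hq : f^[m] q = f^[m - i] (f^[i] q) := by
      rw [← Function.iterate_add_apply]; congr 1; omega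
    rw [hp, hq, h]
  · have hp : f^[i] p = f^[i - m] (f^[m] p) := by
      rw [← Function.iterate_add_apply]; congr 1; omega
    have hq : f^[i] q = f^[i - m] (f^[m] q) := by
      rw [← Function.iterate_add_apply]; congr 1; omega
    rw [hp, hq] at h
    have hpm : f^[m] p ∈ (S f m : Set Q) := by
      simp only [S, Finset.coe_image, Finset.coe_univ, Set.image_univ]
      exact Set.mem_range_self p
    have hqm : f^[m] q ∈ (S f m : Set Q) := by
      simp only [S, Finset.coe_image, Finset.coe_univ, Set.image_univ]
      exact Set.mem_range_self q
    exact hinjk (i - m) hpm hqm h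

end UnaryAux

theorem unary_classes {Q : Type*} [Fintype Q] [DecidableEq Q] (f : Q → Q) (n r : ℕ)
    (hn : Fintype.card Q = n)
    (hr : IsLeast {c | ∃ i : ℕ, (Finset.univ.image (f^[i])).card = c} r) :
    let T : Finset Q := Finset.univ.image (f^[n - r])
    let c : Q → ℕ := fun t => (Finset.univ.filter (fun q => f^[n - r] q = t)).card
    let P : Finset (Finset Q) := Finset.univ.filter
      (fun R : Finset Q => R.card = 2 ∧ ∃ i : ℕ, (R.image (f^[i])).card = 1)
    ((P.card : ℚ) = ∑ t ∈ T, (c t : ℚ) * ((c t : ℚ) - 1) / 2) ∧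
    (∑ t ∈ T, (c t : ℚ) * ((c t : ℚ) - 1) / 2 ≥ (n / 2) * ((n : ℚ) / r - 1)) := by
  intro T c P
  set m := n - r with hm_def
  have hS : ∀ i, UnaryAux.S f i = Finset.univ.image (f^[i]) := fun _ => rfl
  have hrank : (UnaryAux.S f m).card = r := UnaryAux.card_S_rank f n r hn (by
    exact hr)
  have hTr : T.card = r := hrank
  have hstabcard : ∀ j, m ≤ j → (UnaryAux.S f j).card = (UnaryAux.S f m).card := by
    intro j hj
    have h1 : (UnaryAux.S f j).card ≤ (UnaryAux.S f m).card :=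
      Finset.card_le_card (UnaryAux.S_anti f hj)
    have h2 : r ≤ (UnaryAux.S f j).card := hr.2 ⟨j, rfl⟩
    omega
  have hcompress := UnaryAux.compress f m hstabcard
  -- fibers partition
  have hsum : ∑ t ∈ T, c t = n := by
    rw [← hn]
    exact (Finset.card_eq_sum_card_fiberwise (f := f^[m]) (s := Finset.univ) (t := T)
      (fun x _ => Finset.mem_image_of_mem _ (Finset.mem_univ x))).symm
  -- P as disjoint union of pair-sets of fibers
  have hPeq : P = T.biUnion
      (fun t => (Finset.univ.filter (fun q => f^[m] q = t)).powersetCard 2) := by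
    ext R
    simp only [P, Finset.mem_filter, Finset.mem_univ, true_and, Finset.mem_biUnion,
      Finset.mem_powersetCard]
    constructor
    · rintro ⟨hcard2, i, hi⟩
      obtain ⟨p, q, hpq, rfl⟩ := Finset.card_eq_two.mp hcard2
      have him : f^[i] p = f^[i] q := by
        have : ({p, q} : Finset Q).image (f^[i]) = {f^[i] p, f^[i] q} := by
          simp [Finset.image_insert]
        rw [this] at hi
        by_contra hne
        rw [Finset.card_insert_of_notMem (by simpa using hne)] at hi
        simp at hi
      have hmm := hcompress i p q him
      refine ⟨f^[m] p, Finset.mem_image_of_mem _ (Finset.mem_univ p), ?_, hcard2⟩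
      intro x hx
      simp only [Finset.mem_insert, Finset.mem_singleton] at hx
      rcases hx with rfl | rfl
      · simp
      · simp [hmm]
    · rintro ⟨t, _, hsub, hcard2⟩
      refine ⟨hcard2, m, ?_⟩
      obtain ⟨p, q, hpq, rfl⟩ := Finset.card_eq_two.mp hcard2
      have hp : f^[m] p = t := by
        have := hsub (Finset.mem_insert_self p {q})
        simpa using this
      have hq : f^[m] q = t := by
        have := hsub (Finset.mem_insert_of_mem (Finset.mem_singleton_self q))
        simpa using this
      have : ({p, q} : Finset Q).image (f^[m]) = {t} := by
        simp [Finset.image_insert, hp, hq]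
      rw [this, Finset.card_singleton]
  have hPcard : P.card = ∑ t ∈ T, (c t).choose 2 := by
    rw [hPeq, Finset.card_biUnion]
    · exact Finset.sum_congr rfl fun t _ => Finset.card_powersetCard 2 _
    · intro t _ t' _ htt'
      rw [Function.onFun, Finset.disjoint_left]
      intro R hR hR'
      rw [Finset.mem_powersetCard] at hR hR'
      obtain ⟨hsub, hcard2⟩ := hR
      obtain ⟨hsub', -⟩ := hR'
      obtain ⟨p, hp⟩ := Finset.card_pos.mp (by omega : 0 < R.card)
      have h1 := hsub hp
      have h2 := hsub' hp
      simp only [Finset.mem_filter] at h1 h2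
      exact htt' (h1.2 ▸ h2.2)
  have hfirst : (P.card : ℚ) = ∑ t ∈ T, (c t : ℚ) * ((c t : ℚ) - 1) / 2 := by
    rw [hPcard]
    push_cast [Nat.cast_choose_two]
    rfl
  refine ⟨hfirst, ?_⟩
  -- second part
  have hsumQ : ∑ t ∈ T, (c t : ℚ) = n := by exact_mod_cast hsum
  have hsplit : ∑ t ∈ T, (c t : ℚ) * ((c t : ℚ) - 1) / 2
      = ((∑ t ∈ T, (c t : ℚ) ^ 2) - (∑ t ∈ T, (c t : ℚ))) / 2 := by
    rw [← Finset.sum_sub_distrib, Finset.sum_div]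
    exact Finset.sum_congr rfl fun t _ => by ring
  rcases Nat.eq_zero_or_pos r with hr0 | hrpos
  · subst hr0
    have hT0 : T = ∅ := Finset.card_eq_zero.mp hTr
    have hn0 : n = 0 := by rw [← hsum, hT0, Finset.sum_empty]
    rw [hT0, hn0]
    simp
  · have hrQ : (0 : ℚ) < r := by exact_mod_cast hrpos
    have hCS : (∑ t ∈ T, (c t : ℚ)) ^ 2 ≤ (T.card : ℚ) * ∑ t ∈ T, (c t : ℚ) ^ 2 :=
      sq_sum_le_card_mul_sum_sq
    rw [hsumQ, hTr] at hCS
    have hdiv : (n : ℚ) ^ 2 / r ≤ ∑ t ∈ T, (c t : ℚ) ^ 2 := by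
      rw [div_le_iff₀ hrQ]
      linarith [hCS]
    have hrw : ((n : ℚ) / 2) * ((n : ℚ) / r - 1) = ((n : ℚ) ^ 2 / r - n) / 2 := by
      field_simp
    rw [ge_iff_le, hsplit, hsumQ, hrw]
    linarith [hdiv]
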